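/- Let (Ω, 𝒜, P) be a probability space with a filtration (ℱ_s)_{s ∈ [0,T]} for some T > 0, and let M = (M_s)_{s ∈ [0,T]} be a nonnegative (ℱ_s)-martingale under P with continuous sample paths and M_0 = c P-a.s. for a constant c > 0. Define the probability measure Q on 𝒜 by Q(A) = (1/c) ∫_A M_T dP. Then Q({ω : inf_{s ∈ [0,T]} M_s(ω) = 0}) = 0. -/

import Mathlib

open MeasureTheory Filter
open scoped ENNReal
open scoped Topology

lemma stmt11_key {Ω : Type*} {mΩ : MeasurableSpace Ω} (P : Measure Ω) [IsProbabilityMeasure P]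
    (T : ℝ) (ℱ : Filtration ℝ mΩ) (M : ℝ → Ω → ℝ) (ε : ℝ)
    (h_adapted : ∀ s ∈ Set.Icc (0:ℝ) T, Measurable[ℱ s] (M s))
    (h_int : ∀ s ∈ Set.Icc (0:ℝ) T, Integrable (M s) P)
    (h_mart : ∀ s u : ℝ, 0 ≤ s → s ≤ u → u ≤ T → P[M u|ℱ s] =ᵐ[P] M s)
    (l : List ℝ) (hsort : l.Pairwise (· ≤ ·)) (hmem : ∀ t ∈ l, t ∈ Set.Icc (0:ℝ) T) :
    ∫ ω in {ω | ∃ t ∈ l, M t ω < ε}, M T ω ∂P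
      ≤ ε * (P {ω | ∃ t ∈ l, M t ω < ε}).toReal := by
  have hT : T ∈ Set.Icc (0:ℝ) T ∨ l = [] := by
    rcases l with _ | ⟨b, l'⟩
    · exact Or.inr rfl
    · have hb := hmem b (by simp)
      exact Or.inl ⟨le_trans hb.1 hb.2, le_rfl⟩
  induction l using List.reverseRecOn with
  | nil => simp
  | append_singleton l a ih =>
    rcases hT with hTmem | h; swap
    · simp at h
    rw [List.pairwise_append] at hsort
    have hsort' : l.Pairwise (· ≤ ·) := hsort.1
    have hla : ∀ t ∈ l, t ≤ a := fun t ht => hsort.2.2 t ht a (by simp)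
    have hmem' : ∀ t ∈ l, t ∈ Set.Icc (0:ℝ) T := fun t ht => hmem t (by simp [ht])
    have ha : a ∈ Set.Icc (0:ℝ) T := hmem a (by simp)
    set A : Set Ω := {ω | ∃ t ∈ l, M t ω < ε} with hA
    have hAmeasF : MeasurableSet[ℱ a] A := by
      have : A = ⋃ t ∈ l, {ω | M t ω < ε} := by
        ext ω; simp [hA]
      rw [this]
      refine MeasurableSet.biUnion (l.finite_toSet.countable) (fun t ht => ?_)
      exact (ℱ.mono (hla t ht)) _ ((h_adapted t (hmem' t ht)) measurableSet_Iio)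
    have hAmeas : MeasurableSet A := (ℱ.le a) _ hAmeasF
    set C : Set Ω := {ω | M a ω < ε} \ A with hC
    have hCmeasF : MeasurableSet[ℱ a] C :=
      ((h_adapted a ha) measurableSet_Iio).diff hAmeasF
    have hCmeas : MeasurableSet C := (ℱ.le a) _ hCmeasF
    have hdisj : Disjoint A C := Set.disjoint_sdiff_right.mono_left le_rfl
    have hSeq : {ω | ∃ t ∈ l ++ [a], M t ω < ε} = A ∪ C := by
      rw [hC, Set.union_diff_self]
      ext ω; simp [hA, or_comm]
    have hintT := h_int T hTmem
    have hMa : P[M T|ℱ a] =ᵐ[P] M a := h_mart a T ha.1 ha.2 le_rfl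
    have hCint : ∫ ω in C, M T ω ∂P = ∫ ω in C, M a ω ∂P := by
      rw [← setIntegral_condExp (ℱ.le a) hintT hCmeasF]
      exact setIntegral_congr_ae hCmeas (hMa.mono fun ω hω => fun _ => hω.symm) |>.symm
    have hCbound : ∫ ω in C, M a ω ∂P ≤ ε * (P C).toReal := by
      have := setIntegral_mono_on ((h_int a ha).integrableOn)
        ((integrable_const ε).integrableOn) hCmeas
        (fun x hx => le_of_lt hx.1)
      simpa [mul_comm, Measure.real] using this
    have hsplit : ∫ ω in A ∪ C, M T ω ∂P = ∫ ω in A, M T ω ∂P + ∫ ω in C, M T ω ∂P :=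
      setIntegral_union hdisj hCmeas hintT.integrableOn hintT.integrableOn
    have hmeasadd : (P (A ∪ C)).toReal = (P A).toReal + (P C).toReal := by
      rw [measure_union hdisj hCmeas, ENNReal.toReal_add (measure_ne_top P A) (measure_ne_top P C)]
    have hih := ih hsort' hmem' (Or.inl hTmem)
    rw [hSeq, hsplit, hmeasadd, mul_add]
    exact add_le_add hih (hCint ▸ hCbound)

/-- if `M` is a nonnegative continuous `(ℱ_s)`-martingale on `[0,T]` with
`M_0 = c > 0`, and `Q` is the measure with density `M_T / c` w.r.t. `P`, then
`Q(inf_{s ∈ [0,T]} M_s = 0) = 0`. -/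
theorem stmt11 {Ω : Type*} {mΩ : MeasurableSpace Ω} (P : Measure Ω) [IsProbabilityMeasure P]
    (T : ℝ) (hT : 0 < T) (ℱ : Filtration ℝ mΩ)
    (M : ℝ → Ω → ℝ) (c : ℝ) (hc : 0 < c)
    (h_adapted : ∀ s ∈ Set.Icc (0:ℝ) T, Measurable[ℱ s] (M s))
    (h_nonneg : ∀ s ∈ Set.Icc (0:ℝ) T, ∀ ω, 0 ≤ M s ω)
    (h_cont : ∀ ω, ContinuousOn (fun s => M s ω) (Set.Icc (0:ℝ) T))
    (h_int : ∀ s ∈ Set.Icc (0:ℝ) T, Integrable (M s) P)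
    (h_mart : ∀ s u : ℝ, 0 ≤ s → s ≤ u → u ≤ T → P[M u|ℱ s] =ᵐ[P] M s)
    (h0 : ∀ᵐ ω ∂P, M 0 ω = c) :
    (P.withDensity fun ω => ENNReal.ofReal (c⁻¹ * M T ω))
      {ω | (⨅ s : Set.Icc (0:ℝ) T, M s.1 ω) = 0} = 0 := by
  classical
  obtain ⟨q, hq⟩ := exists_surjective_nat ℚ
  set e : ℕ → ℝ := fun n => max 0 (min T ((q n : ℝ))) with he
  have hTIcc : T ∈ Set.Icc (0:ℝ) T := ⟨hT.le, le_rfl⟩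
  have heIcc : ∀ n, e n ∈ Set.Icc (0:ℝ) T := fun n =>
    ⟨le_max_left _ _, max_le hT.le (min_le_left _ _)⟩
  have hclamp : ∀ (r s : ℝ), s ∈ Set.Icc (0:ℝ) T → |max 0 (min T r) - s| ≤ |r - s| := by
    intro r s hs
    obtain ⟨hs0, hsT⟩ := hs
    rcases le_total r 0 with h1 | h1
    · rw [min_eq_right (h1.trans hT.le), max_eq_left h1,
        abs_of_nonpos (by linarith), abs_of_nonpos (by linarith)]
      linarith
    · rcases le_total r T with h2 | h2
      · rw [min_eq_right h2, max_eq_right h1]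
      · rw [min_eq_left h2, max_eq_right hT.le,
          abs_of_nonneg (by linarith), abs_of_nonneg (by linarith)]
        linarith
  set Starget : Set Ω := {ω | (⨅ s : Set.Icc (0:ℝ) T, M s.1 ω) = 0} with hStarget
  haveI : Nonempty (Set.Icc (0:ℝ) T) := ⟨⟨0, le_rfl, hT.le⟩⟩
  -- main bound for each ε > 0
  have hbound : ∀ ε : ℝ, 0 < ε →
      (P.withDensity fun ω => ENNReal.ofReal (c⁻¹ * M T ω)) Starget
        ≤ ENNReal.ofReal (c⁻¹ * ε) := by
    intro ε hε
    set S : ℕ → Set Ω := fun n => {ω | ∃ k ≤ n, M (e k) ω < ε} with hS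
    have hSmeas : ∀ n, MeasurableSet (S n) := by
      intro n
      have : S n = ⋃ k ∈ Finset.range (n+1), {ω | M (e k) ω < ε} := by
        ext ω; simp [hS, Nat.lt_succ_iff]
      rw [this]
      exact MeasurableSet.biUnion (Finset.range (n+1)).countable_toSet
        (fun k _ => (ℱ.le (e k)) _ ((h_adapted (e k) (heIcc k)) measurableSet_Iio))
    have hSmono : Monotone S := by
      intro m n hmn ω hω
      obtain ⟨k, hk, hkω⟩ := hω
      exact ⟨k, hk.trans hmn, hkω⟩
    -- integral bound via key lemma
    have hintbound : ∀ n, ∫ ω in S n, M T ω ∂P ≤ ε := by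
      intro n
      set F : Finset ℝ := (Finset.range (n+1)).image e with hF
      set l : List ℝ := F.sort (· ≤ ·) with hl
      have hset : {ω | ∃ t ∈ l, M t ω < ε} = S n := by
        ext ω
        simp only [hS, Set.mem_setOf_eq, hl, Finset.mem_sort, hF, Finset.mem_image,
          Finset.mem_range, Nat.lt_succ_iff]
        constructor
        · rintro ⟨t, ⟨k, hk, rfl⟩, hkω⟩; exact ⟨k, hk, hkω⟩
        · rintro ⟨k, hk, hkω⟩; exact ⟨e k, ⟨k, hk, rfl⟩, hkω⟩
      have hmem : ∀ t ∈ l, t ∈ Set.Icc (0:ℝ) T := by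
        intro t ht
        rw [hl, Finset.mem_sort] at ht
        obtain ⟨k, _, rfl⟩ := Finset.mem_image.1 ht
        exact heIcc k
      have h1 := stmt11_key P T ℱ M ε h_adapted h_int h_mart l
        (Finset.pairwise_sort _ _) hmem
      rw [hset] at h1
      refine h1.trans ?_
      calc ε * (P (S n)).toReal ≤ ε * 1 := by
            refine mul_le_mul_of_nonneg_left ?_ hε.le
            exact ENNReal.toReal_le_of_le_ofReal zero_le_one (by simpa using prob_le_one)
        _ = ε := mul_one ε
    -- Q bound for each S n
    have hQbound : ∀ n,
        (P.withDensity fun ω => ENNReal.ofReal (c⁻¹ * M T ω)) (S n)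
          ≤ ENNReal.ofReal (c⁻¹ * ε) := by
      intro n
      rw [withDensity_apply _ (hSmeas n)]
      have hint : Integrable (fun ω => c⁻¹ * M T ω) (P.restrict (S n)) :=
        ((h_int T hTIcc).const_mul c⁻¹).restrict
      have hnn : 0 ≤ᵐ[P.restrict (S n)] fun ω => c⁻¹ * M T ω :=
        Filter.Eventually.of_forall fun ω =>
          mul_nonneg (inv_nonneg.2 hc.le) (h_nonneg T hTIcc ω)
      rw [← ofReal_integral_eq_lintegral_ofReal hint hnn]
      refine ENNReal.ofReal_le_ofReal ?_
      rw [integral_const_mul]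
      exact mul_le_mul_of_nonneg_left (hintbound n) (inv_nonneg.2 hc.le)
    -- inclusion
    have hsub : Starget ⊆ ⋃ n, S n := by
      intro ω hω
      have hinf : (⨅ s : Set.Icc (0:ℝ) T, M s.1 ω) < ε := by
        rw [hStarget] at hω; rw [hω]; exact hε
      obtain ⟨s, hs⟩ := exists_lt_of_ciInf_lt hinf
      have hcw : ContinuousWithinAt (fun t => M t ω) (Set.Icc (0:ℝ) T) s.1 :=
        h_cont ω s.1 s.2
      have hpre : (fun t => M t ω) ⁻¹' Set.Iio ε ∈ 𝓝[Set.Icc (0:ℝ) T] s.1 :=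
        hcw (Iio_mem_nhds hs)
      obtain ⟨δ, hδ, hball⟩ := Metric.mem_nhdsWithin_iff.1 hpre
      obtain ⟨r, hr⟩ := exists_rat_near s.1 hδ
      obtain ⟨n, rfl⟩ := hq r
      have hx : e n ∈ Metric.ball s.1 δ ∩ Set.Icc (0:ℝ) T := by
        refine ⟨?_, heIcc n⟩
        rw [Metric.mem_ball, Real.dist_eq]
        calc |e n - s.1| ≤ |(q n : ℝ) - s.1| := hclamp _ _ s.2
          _ = |s.1 - (q n : ℝ)| := abs_sub_comm _ _
          _ < δ := hr
      have : M (e n) ω < ε := hball hx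
      exact Set.mem_iUnion.2 ⟨n, n, le_rfl, this⟩
    calc (P.withDensity fun ω => ENNReal.ofReal (c⁻¹ * M T ω)) Starget
        ≤ (P.withDensity fun ω => ENNReal.ofReal (c⁻¹ * M T ω)) (⋃ n, S n) :=
          measure_mono hsub
      _ = ⨆ n, (P.withDensity fun ω => ENNReal.ofReal (c⁻¹ * M T ω)) (S n) :=
          (hSmono.directed_le).measure_iUnion
      _ ≤ ENNReal.ofReal (c⁻¹ * ε) := iSup_le hQbound
  -- take ε → 0
  have htend : Tendsto (fun n : ℕ => ENNReal.ofReal (c⁻¹ * (1 / (n + 1)))) atTop (𝓝 0) := by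
    have h1 : Tendsto (fun n : ℕ => c⁻¹ * (1 / ((n : ℝ) + 1))) atTop (𝓝 (c⁻¹ * 0)) :=
      tendsto_one_div_add_atTop_nhds_zero_nat.const_mul c⁻¹
    have := ENNReal.tendsto_ofReal h1
    simpa using this
  have hle : (P.withDensity fun ω => ENNReal.ofReal (c⁻¹ * M T ω)) Starget ≤ 0 :=
    ge_of_tendsto' htend fun n => hbound (1 / (n + 1)) (by positivity)
  exact le_antisymm hle zero_le
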